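/- For every n ≥ 1: LB_n(1/2/3; q) = RS_n(1/2/3; q) = 1 + ∑_{k=0}^{n-2} C(n-1, k+1) q^k, and LS_n(1/2/3; r) = RB_n(1/2/3; r) = (r+1)^{n-1}, as identities of polynomials. -/

import Mathlib

open Finset

/-- `IsRGF w` : `w = a₁⋯aₙ` is a restricted growth function: all letters are
positive, the first letter is `1` and each later letter is at most one more
than the maximum of the preceding prefix. -/
def IsRGF (w : List ℕ) : Prop :=
  (∀ a ∈ w, 1 ≤ a) ∧
  (0 < w.length → w.getD 0 0 = 1) ∧
  (∀ j : ℕ, j + 1 < w.length →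
    w.getD (j + 1) 0 ≤ 1 + (w.take (j + 1)).foldr max 0)

/-- The set partition encoded by the word `w` contains the set-partition
pattern encoded by the word `p`:  there are positions, listed increasingly,
whose "same block" (= same letter) pattern in `w` is exactly that of `p`. -/
def ContainsPat (w p : List ℕ) : Prop :=
  ∃ f : Fin p.length → Fin w.length, StrictMono f ∧
    ∀ a b : Fin p.length, (w.get (f a) = w.get (f b) ↔ p.get a = p.get b)

/-- `Rn n p` : the restricted growth functions of length `n` whose associated
set partition avoids the pattern (of set partitions) encoded by the RGF `p`.
Via the standard bijection `σ ↦ w(σ)` this is `R_n(π) ≅ Π_n(π)`.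
Patterns of `[3]`:  `1/2/3 ↦ [1,2,3]`, `1/23 ↦ [1,2,2]`, `13/2 ↦ [1,2,1]`,
`12/3 ↦ [1,1,2]`, `123 ↦ [1,1,1]`. -/
def Rn (n : ℕ) (p : List ℕ) : Set (List ℕ) :=
  {w | w.length = n ∧ IsRGF w ∧ ¬ ContainsPat w p}

/-- `lb` : sum over positions `j` of the number of distinct values occurring
before position `j` that are bigger than the letter at `j`. -/
def statLB (w : List ℕ) : ℕ :=
  ∑ j ∈ Finset.range w.length,
    ((w.take j).toFinset.filter (fun v => w.getD j 0 < v)).card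

/-- `ls` : left and smaller. -/
def statLS (w : List ℕ) : ℕ :=
  ∑ j ∈ Finset.range w.length,
    ((w.take j).toFinset.filter (fun v => v < w.getD j 0)).card

/-- `rb` : right and bigger. -/
def statRB (w : List ℕ) : ℕ :=
  ∑ j ∈ Finset.range w.length,
    ((w.drop (j + 1)).toFinset.filter (fun v => w.getD j 0 < v)).card

/-- `rs` : right and smaller. -/
def statRS (w : List ℕ) : ℕ :=
  ∑ j ∈ Finset.range w.length,
    ((w.drop (j + 1)).toFinset.filter (fun v => v < w.getD j 0)).card

/-- The four–variable generating function
`F_n(π;q,r,s,t) = ∑_{σ∈Π_n(π)} q^{lb} r^{ls} s^{rb} t^{rs}`, with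
`q = X 0`, `r = X 1`, `s = X 2`, `t = X 3`. -/
noncomputable def Fgen (n : ℕ) (p : List ℕ) : MvPolynomial (Fin 4) ℤ :=
  ∑ᶠ w ∈ Rn n p,
    (MvPolynomial.X 0 : MvPolynomial (Fin 4) ℤ) ^ statLB w *
      MvPolynomial.X 1 ^ statLS w *
      MvPolynomial.X 2 ^ statRB w *
      MvPolynomial.X 3 ^ statRS w

/-- `LB_n(π;q)`. -/
noncomputable def LBp (n : ℕ) (p : List ℕ) : Polynomial ℤ :=
  ∑ᶠ w ∈ Rn n p, Polynomial.X ^ statLB w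

/-- `LS_n(π;q)`. -/
noncomputable def LSp (n : ℕ) (p : List ℕ) : Polynomial ℤ :=
  ∑ᶠ w ∈ Rn n p, Polynomial.X ^ statLS w

/-- `RB_n(π;q)`. -/
noncomputable def RBp (n : ℕ) (p : List ℕ) : Polynomial ℤ :=
  ∑ᶠ w ∈ Rn n p, Polynomial.X ^ statRB w

/-- `RS_n(π;q)`. -/
noncomputable def RSp (n : ℕ) (p : List ℕ) : Polynomial ℤ :=
  ∑ᶠ w ∈ Rn n p, Polynomial.X ^ statRS w
namespace S7
open Polynomial


lemma left_sum_append (F : List ℕ → ℕ → ℕ) (w : List ℕ) (x : ℕ) :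
    (∑ j ∈ Finset.range (w ++ [x]).length, F ((w ++ [x]).take j) ((w ++ [x]).getD j 0))
      = (∑ j ∈ Finset.range w.length, F (w.take j) (w.getD j 0)) + F w x := by
  rw [List.length_append, List.length_singleton, Finset.sum_range_succ]
  congr 1
  · refine Finset.sum_congr rfl fun j hj => ?_
    rw [Finset.mem_range] at hj
    rw [List.take_append_of_le_length hj.le, List.getD_append _ _ _ _ hj]
  · rw [List.take_left, List.getD_append_right _ _ _ _ le_rfl]
    simp

lemma right_sum_append (F : List ℕ → ℕ → ℕ) (w : List ℕ) (x : ℕ) :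
    (∑ j ∈ Finset.range (w ++ [x]).length, F ((w ++ [x]).drop (j+1)) ((w ++ [x]).getD j 0))
      = (∑ j ∈ Finset.range w.length, F (w.drop (j+1) ++ [x]) (w.getD j 0)) + F [] x := by
  rw [List.length_append, List.length_singleton, Finset.sum_range_succ]
  congr 1
  · refine Finset.sum_congr rfl fun j hj => ?_
    rw [Finset.mem_range] at hj
    rw [List.getD_append _ _ _ _ hj, List.drop_append,
      Nat.sub_eq_zero_of_le (by omega), List.drop_zero]
  · rw [List.getD_append_right _ _ _ _ le_rfl]
    have h1 : (w ++ [x]).drop (w.length + 1) = [] :=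
      List.drop_eq_nil_of_le (by simp)
    rw [h1]
    simp

lemma getD_mem {w : List ℕ} {j : ℕ} (h : j < w.length) : w.getD j 0 ∈ w := by
  rw [List.getD_eq_getElem _ _ h]
  exact List.getElem_mem h

/-- count of letter x -/
def cnt (x : ℕ) (w : List ℕ) : ℕ :=
  ∑ j ∈ Finset.range w.length, (if w.getD j 0 = x then 1 else 0)

lemma cnt_append (x y : ℕ) (w : List ℕ) :
    cnt x (w ++ [y]) = cnt x w + (if y = x then 1 else 0) :=
  left_sum_append (fun _ a => if a = x then 1 else 0) w y

variable {w : List ℕ}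

lemma statLB_append2 (hel : ∀ a ∈ w, a = 1 ∨ a = 2) :
    statLB (w ++ [2]) = statLB w := by
  have h := left_sum_append (fun t a => (t.toFinset.filter (fun v => a < v)).card) w 2
  simp only [statLB]
  rw [h]
  have : (w.toFinset.filter (fun v => 2 < v)) = ∅ := by
    rw [Finset.filter_eq_empty_iff]
    intro v hv
    rcases hel v (List.mem_toFinset.mp hv) with rfl | rfl <;> omega
  rw [this]
  simp

lemma statLB_append1 (hel : ∀ a ∈ w, a = 1 ∨ a = 2) :
    statLB (w ++ [1]) = statLB w + (if 2 ∈ w then 1 else 0) := by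
  have h := left_sum_append (fun t a => (t.toFinset.filter (fun v => a < v)).card) w 1
  simp only [statLB]
  rw [h]
  congr 1
  have : (w.toFinset.filter (fun v => 1 < v)) = if 2 ∈ w then {2} else ∅ := by
    split_ifs with h2
    · ext v
      simp only [Finset.mem_filter, List.mem_toFinset, Finset.mem_singleton]
      constructor
      · rintro ⟨hv, hlt⟩; rcases hel v hv with rfl | rfl <;> omega
      · rintro rfl; exact ⟨h2, by omega⟩
    · rw [Finset.filter_eq_empty_iff]
      intro v hv
      rcases hel v (List.mem_toFinset.mp hv) with rfl | rfl
      · omega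
      · exact absurd (List.mem_toFinset.mp hv) h2
  rw [this]
  split_ifs <;> simp

lemma statLS_append1 (hel : ∀ a ∈ w, a = 1 ∨ a = 2) :
    statLS (w ++ [1]) = statLS w := by
  have h := left_sum_append (fun t a => (t.toFinset.filter (fun v => v < a)).card) w 1
  simp only [statLS]
  rw [h]
  have : (w.toFinset.filter (fun v => v < 1)) = ∅ := by
    rw [Finset.filter_eq_empty_iff]
    intro v hv
    rcases hel v (List.mem_toFinset.mp hv) with rfl | rfl <;> omega
  rw [this]
  simp

lemma statLS_append2 (hel : ∀ a ∈ w, a = 1 ∨ a = 2) (h1 : 1 ∈ w) :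
    statLS (w ++ [2]) = statLS w + 1 := by
  have h := left_sum_append (fun t a => (t.toFinset.filter (fun v => v < a)).card) w 2
  simp only [statLS]
  rw [h]
  congr 1
  have : (w.toFinset.filter (fun v => v < 2)) = {1} := by
    ext v
    simp only [Finset.mem_filter, List.mem_toFinset, Finset.mem_singleton]
    constructor
    · rintro ⟨hv, hlt⟩; rcases hel v hv with rfl | rfl <;> omega
    · rintro rfl; exact ⟨h1, by omega⟩
  rw [this]
  simp

lemma statRB_append1 (hel : ∀ a ∈ w, a = 1 ∨ a = 2) :
    statRB (w ++ [1]) = statRB w := by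
  have h := right_sum_append (fun t a => (t.toFinset.filter (fun v => a < v)).card) w 1
  simp only [statRB]
  rw [h]
  simp only [List.toFinset_nil, Finset.filter_empty, Finset.card_empty, add_zero]
  refine Finset.sum_congr rfl fun j hj => ?_
  rw [Finset.mem_range] at hj
  rw [List.toFinset_append, List.toFinset_cons, List.toFinset_nil, LawfulSingleton.insert_empty_eq]
  rw [Finset.union_comm, ← Finset.insert_eq]
  rw [Finset.filter_insert]
  have : ¬ (w.getD j 0 < 1) := by
    rcases hel _ (getD_mem hj) with h' | h' <;> omega
  rw [if_neg this]

lemma statRB_append2 (hel : ∀ a ∈ w, a = 1 ∨ a = 2) :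
    statRB (w ++ [2]) = cnt 1 w := by
  have h := right_sum_append (fun t a => (t.toFinset.filter (fun v => a < v)).card) w 2
  simp only [statRB, cnt]
  rw [h]
  simp only [List.toFinset_nil, Finset.filter_empty, Finset.card_empty, add_zero]
  refine Finset.sum_congr rfl fun j hj => ?_
  rw [Finset.mem_range] at hj
  rw [List.toFinset_append, List.toFinset_cons, List.toFinset_nil, LawfulSingleton.insert_empty_eq]
  rw [Finset.union_comm, ← Finset.insert_eq]
  rcases hel _ (getD_mem hj) with h' | h'
  · rw [h', if_pos rfl]
    rw [Finset.filter_insert, if_pos (by omega)]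
    rw [Finset.card_eq_one]
    refine ⟨2, ?_⟩
    ext v
    simp only [Finset.mem_insert, Finset.mem_filter, List.mem_toFinset, Finset.mem_singleton]
    constructor
    · rintro (rfl | ⟨hv, hlt⟩)
      · rfl
      · rcases hel v (List.mem_of_mem_drop hv) with rfl | rfl <;> omega
    · rintro rfl; exact Or.inl rfl
  · rw [h', if_neg (by omega)]
    rw [Finset.filter_insert, if_neg (by omega)]
    rw [Finset.card_eq_zero, Finset.filter_eq_empty_iff]
    intro v hv
    rcases hel v (List.mem_of_mem_drop (List.mem_toFinset.mp hv)) with rfl | rfl <;> omega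

lemma statRS_append2 (hel : ∀ a ∈ w, a = 1 ∨ a = 2) :
    statRS (w ++ [2]) = statRS w := by
  have h := right_sum_append (fun t a => (t.toFinset.filter (fun v => v < a)).card) w 2
  simp only [statRS]
  rw [h]
  simp only [List.toFinset_nil, Finset.filter_empty, Finset.card_empty, add_zero]
  refine Finset.sum_congr rfl fun j hj => ?_
  rw [Finset.mem_range] at hj
  rw [List.toFinset_append, List.toFinset_cons, List.toFinset_nil, LawfulSingleton.insert_empty_eq]
  rw [Finset.union_comm, ← Finset.insert_eq]
  rw [Finset.filter_insert]
  have : ¬ (2 < w.getD j 0) := by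
    rcases hel _ (getD_mem hj) with h' | h' <;> omega
  rw [if_neg this]

lemma statRS_append1 (hel : ∀ a ∈ w, a = 1 ∨ a = 2) :
    statRS (w ++ [1]) = cnt 2 w := by
  have h := right_sum_append (fun t a => (t.toFinset.filter (fun v => v < a)).card) w 1
  simp only [statRS, cnt]
  rw [h]
  simp only [List.toFinset_nil, Finset.filter_empty, Finset.card_empty, add_zero]
  refine Finset.sum_congr rfl fun j hj => ?_
  rw [Finset.mem_range] at hj
  rw [List.toFinset_append, List.toFinset_cons, List.toFinset_nil, LawfulSingleton.insert_empty_eq]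
  rw [Finset.union_comm, ← Finset.insert_eq]
  rcases hel _ (getD_mem hj) with h' | h'
  · rw [h', if_neg (by omega)]
    rw [Finset.filter_insert, if_neg (by omega)]
    rw [Finset.card_eq_zero, Finset.filter_eq_empty_iff]
    intro v hv
    rcases hel v (List.mem_of_mem_drop (List.mem_toFinset.mp hv)) with rfl | rfl <;> omega
  · rw [h', if_pos rfl]
    rw [Finset.filter_insert, if_pos (by omega)]
    rw [Finset.card_eq_one]
    refine ⟨1, ?_⟩
    ext v
    simp only [Finset.mem_insert, Finset.mem_filter, List.mem_toFinset, Finset.mem_singleton]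
    constructor
    · rintro (rfl | ⟨hv, hlt⟩)
      · rfl
      · rcases hel v (List.mem_of_mem_drop hv) with rfl | rfl <;> omega
    · rintro rfl; exact Or.inl rfl



def V : ℕ → Finset (List ℕ)
  | 0 => {[1]}
  | m + 1 => ((V m).image (· ++ [1])) ∪ ((V m).image (· ++ [2]))

lemma mem_V_props {m : ℕ} {w : List ℕ} (h : w ∈ V m) :
    w.length = m + 1 ∧ w.getD 0 0 = 1 ∧ (∀ a ∈ w, a = 1 ∨ a = 2) := by
  induction m generalizing w with
  | zero =>
    simp only [V, Finset.mem_singleton] at h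
    subst h
    refine ⟨rfl, rfl, ?_⟩
    intro a ha
    simp at ha
    omega
  | succ m ih =>
    simp only [V, Finset.mem_union, Finset.mem_image] at h
    have key : ∀ x : ℕ, (x = 1 ∨ x = 2) → ∀ v ∈ V m, w = v ++ [x] →
        w.length = m + 2 ∧ w.getD 0 0 = 1 ∧ (∀ a ∈ w, a = 1 ∨ a = 2) := by
      rintro x hx v hv rfl
      obtain ⟨hl, h0, hel⟩ := ih hv
      refine ⟨by simp [hl], ?_, ?_⟩
      · rw [List.getD_append _ _ _ _ (by omega)]
        exact h0
      · intro a ha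
        rcases List.mem_append.mp ha with h' | h'
        · exact hel a h'
        · simp only [List.mem_singleton] at h'
          subst h'
          exact hx
    rcases h with ⟨v, hv, hw⟩ | ⟨v, hv, hw⟩
    · exact key 1 (Or.inl rfl) v hv hw.symm
    · exact key 2 (Or.inr rfl) v hv hw.symm

lemma mem_V_of {m : ℕ} {w : List ℕ} (hl : w.length = m + 1)
    (h0 : w.getD 0 0 = 1) (hel : ∀ a ∈ w, a = 1 ∨ a = 2) : w ∈ V m := by
  induction m generalizing w with
  | zero =>
    match w, hl with
    | [a], _ =>
      simp only [List.getD] at h0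
      simp at h0
      subst h0
      simp [V]
  | succ m ih =>
    have hne : w ≠ [] := by intro h; rw [h] at hl; simp at hl
    obtain ⟨v, x, rfl⟩ : ∃ v x, w = v ++ [x] :=
      ⟨w.dropLast, w.getLast hne, (List.dropLast_append_getLast hne).symm⟩
    have hvl : v.length = m + 1 := by
      rw [List.length_append, List.length_singleton] at hl
      omega
    have h0' : v.getD 0 0 = 1 := by
      rwa [List.getD_append _ _ _ _ (by omega)] at h0
    have hvV : v ∈ V m := ih hvl h0' (fun a ha => hel a (by simp [ha]))
    have hx : x = 1 ∨ x = 2 := hel x (by simp)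
    show _ ∈ ((V m).image (· ++ [1])) ∪ ((V m).image (· ++ [2]))
    rcases hx with rfl | rfl
    · exact Finset.mem_union_left _ (Finset.mem_image_of_mem _ hvV)
    · exact Finset.mem_union_right _ (Finset.mem_image_of_mem _ hvV)

lemma sum_V_succ {M : Type*} [AddCommMonoid M] (m : ℕ) (F : List ℕ → M) :
    ∑ w ∈ V (m + 1), F w
      = (∑ w ∈ V m, F (w ++ [1])) + ∑ w ∈ V m, F (w ++ [2]) := by
  have hdisj : Disjoint ((V m).image (· ++ [1])) ((V m).image (· ++ [2])) := by
    rw [Finset.disjoint_left]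
    rintro u hu1 hu2
    simp only [Finset.mem_image] at hu1 hu2
    obtain ⟨a, _, ha⟩ := hu1
    obtain ⟨b, _, hb⟩ := hu2
    have h := ha.trans hb.symm
    have hlen : a.length = b.length := by
      have := congrArg List.length h
      simpa using this
    have := List.append_inj_right h hlen
    simp at this
  show ∑ w ∈ ((V m).image (· ++ [1])) ∪ ((V m).image (· ++ [2])), F w = _
  rw [Finset.sum_union hdisj,
    Finset.sum_image (fun x _ y _ h => List.append_left_injective [1] h),
    Finset.sum_image (fun x _ y _ h => List.append_left_injective [2] h)]

lemma one_mem_V {m : ℕ} {w : List ℕ} (h : w ∈ V m) : (1 : ℕ) ∈ w := by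
  obtain ⟨hl, h0, _⟩ := mem_V_props h
  have hlt : 0 < w.length := by omega
  rw [← h0, List.getD_eq_getElem _ _ hlt]
  exact List.getElem_mem hlt

lemma replicate_mem_V (m : ℕ) : List.replicate (m + 1) 1 ∈ V m := by
  induction m with
  | zero => simp [V]
  | succ m ih =>
    rw [List.replicate_succ']
    exact Finset.mem_union_left _ (Finset.mem_image_of_mem _ ih)




noncomputable def F (m : ℕ) : Polynomial ℤ :=
  1 + ∑ k ∈ Finset.range m, ((m.choose (k + 1) : Polynomial ℤ) * Polynomial.X ^ k)

lemma binom (m : ℕ) :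
    ((X : Polynomial ℤ) + 1) ^ m = ∑ k ∈ Finset.range (m + 1), ((m.choose k : Polynomial ℤ) * X ^ k) := by
  rw [add_pow]
  refine Finset.sum_congr rfl fun k _ => ?_
  simp [mul_comm]

lemma Fstep (m : ℕ) : F (m + 1) = F m + ((X : Polynomial ℤ) + 1) ^ m := by
  unfold F
  rw [binom]
  have h1 : ∀ k ∈ Finset.range (m + 1),
      (((m + 1).choose (k + 1) : Polynomial ℤ) * X ^ k)
        = ((m.choose k : Polynomial ℤ) * X ^ k) + ((m.choose (k + 1) : Polynomial ℤ) * X ^ k) := by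
    intro k _
    rw [Nat.choose_succ_succ]
    push_cast
    ring
  rw [Finset.sum_congr rfl h1, Finset.sum_add_distrib]
  have h2 : ∑ k ∈ Finset.range (m + 1), ((m.choose (k + 1) : Polynomial ℤ) * X ^ k)
      = ∑ k ∈ Finset.range m, ((m.choose (k + 1) : Polynomial ℤ) * X ^ k) := by
    rw [Finset.sum_range_succ, Nat.choose_succ_self]
    simp
  rw [h2]
  ring

lemma XF (m : ℕ) : (X : Polynomial ℤ) * F m = ((X : Polynomial ℤ) + 1) ^ m + X - 1 := by
  have h2 : ((X : Polynomial ℤ) + 1) ^ m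
      = (∑ k ∈ Finset.range m, ((m.choose (k + 1) : Polynomial ℤ) * X ^ (k + 1))) + 1 := by
    rw [binom, Finset.sum_range_succ']
    simp
  unfold F
  rw [mul_add, mul_one, Finset.mul_sum]
  have h3 : ∑ k ∈ Finset.range m, (X : Polynomial ℤ) * ((m.choose (k + 1) : Polynomial ℤ) * X ^ k)
      = ∑ k ∈ Finset.range m, ((m.choose (k + 1) : Polynomial ℤ) * X ^ (k + 1)) := by
    refine Finset.sum_congr rfl fun k _ => ?_
    ring
  rw [h3, h2]
  ring




lemma foldr_max_eq (l : List ℕ) (x : ℕ) : l.foldr max x = max x (l.foldr max 0) := by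
  induction l with
  | nil => simp
  | cons a t ih =>
    simp only [List.foldr_cons, ih]
    exact max_left_comm a x _

lemma rgf_attain {w : List ℕ} (hw : IsRGF w) :
    ∀ j, j ≤ w.length → ∀ v, 1 ≤ v → v ≤ (w.take j).foldr max 0 →
      ∃ i, i < j ∧ w.getD i 0 = v := by
  intro j
  induction j with
  | zero => intro _ v hv1 hv2; simp at hv2; omega
  | succ j ih =>
    intro hj v hv1 hv2
    have hjlt : j < w.length := by omega
    have htake : w.take (j + 1) = w.take j ++ [w.getD j 0] := by
      rw [List.take_succ, List.getElem?_eq_getElem hjlt]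
      rw [List.getD_eq_getElem _ _ hjlt]
      rfl
    rw [htake, List.foldr_append] at hv2
    simp only [List.foldr_cons, List.foldr_nil, Nat.max_zero] at hv2
    rw [foldr_max_eq] at hv2
    rcases le_or_gt v ((w.take j).foldr max 0) with hle | hgt
    · obtain ⟨i, hi, hiv⟩ := ih (by omega) v hv1 hle
      exact ⟨i, by omega, hiv⟩
    · have hva : v ≤ w.getD j 0 := by
        rcases le_max_iff.mp hv2 with h | h
        · exact h
        · omega
      have hgd : w.getD j 0 ≤ 1 + (w.take j).foldr max 0 := by
        rcases Nat.eq_zero_or_pos j with rfl | hpos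
        · rw [hw.2.1 (by omega)]
          omega
        · obtain ⟨j', rfl⟩ : ∃ j', j = j' + 1 := ⟨j - 1, by omega⟩
          exact hw.2.2 j' hjlt
      exact ⟨j, by omega, by omega⟩

lemma letters_le_two {w : List ℕ} (hw : IsRGF w) (hav : ¬ ContainsPat w [1, 2, 3]) :
    ∀ a ∈ w, a ≤ 2 := by
  by_contra h
  push_neg at h
  obtain ⟨a, ha, ha3⟩ := h
  obtain ⟨j, hj, hja⟩ := List.getElem_of_mem ha
  have hgj : w.getD j 0 = a := by rw [List.getD_eq_getElem _ _ hj, hja]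
  have hj0 : j ≠ 0 := by
    rintro rfl
    have h0 : w.getD 0 0 = 1 := hw.2.1 (by omega)
    rw [hgj] at h0
    omega
  obtain ⟨j', rfl⟩ : ∃ j', j = j' + 1 := ⟨j - 1, by omega⟩
  have hgrow := hw.2.2 j' hj
  rw [hgj] at hgrow
  have hM2 : 2 ≤ (w.take (j' + 1)).foldr max 0 := by omega
  obtain ⟨i1, hi1, hv1⟩ := rgf_attain hw (j' + 1) (by omega) 1 le_rfl (by omega)
  obtain ⟨i2, hi2, hv2⟩ := rgf_attain hw (j' + 1) (by omega) 2 (by omega) (by omega)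
  apply hav
  have hne : i1 ≠ i2 := by
    rintro rfl
    rw [hv1] at hv2
    omega
  have key : ∃ p0 p1, p0 < p1 ∧ p1 < j' + 1 ∧
      w.getD p0 0 ≠ w.getD p1 0 ∧ w.getD p0 0 ≤ 2 ∧ w.getD p1 0 ≤ 2 := by
    rcases lt_or_gt_of_ne hne with h' | h'
    · exact ⟨i1, i2, h', hi2, by omega, by omega, by omega⟩
    · exact ⟨i2, i1, h', hi1, by omega, by omega, by omega⟩
  obtain ⟨p0, p1, hp01, hp1j, hne', hle0, hle1⟩ := key
  have hp0w : p0 < w.length := by omega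
  have hp1w : p1 < w.length := by omega
  have e0 : w.get ⟨p0, hp0w⟩ = w.getD p0 0 :=
    (List.getD_eq_getElem _ _ hp0w).symm
  have e1 : w.get ⟨p1, hp1w⟩ = w.getD p1 0 :=
    (List.getD_eq_getElem _ _ hp1w).symm
  have e2 : w.get ⟨j' + 1, hj⟩ = a := hja
  have d01 : w.get ⟨p0, hp0w⟩ ≠ w.get ⟨p1, hp1w⟩ := by
    rw [e0, e1]; exact hne'
  have d02 : w.get ⟨p0, hp0w⟩ ≠ w.get ⟨j' + 1, hj⟩ := by
    rw [e0, e2]; omega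
  have d12 : w.get ⟨p1, hp1w⟩ ≠ w.get ⟨j' + 1, hj⟩ := by
    rw [e1, e2]; omega
  refine ⟨![⟨p0, hp0w⟩, ⟨p1, hp1w⟩, ⟨j' + 1, hj⟩], ?_, ?_⟩
  · intro x y hxy
    fin_cases x <;> fin_cases y <;>
      first
        | exact absurd hxy (by decide)
        | exact Fin.mk_lt_mk.mpr (by omega)
  · intro x y
    fin_cases x <;> fin_cases y <;>
      first
        | exact iff_of_true rfl rfl
        | exact iff_of_false d01 (by decide)
        | exact iff_of_false d01.symm (by decide)
        | exact iff_of_false d02 (by decide)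
        | exact iff_of_false d02.symm (by decide)
        | exact iff_of_false d12 (by decide)
        | exact iff_of_false d12.symm (by decide)

lemma not_contains {w : List ℕ} (hel : ∀ a ∈ w, a = 1 ∨ a = 2) :
    ¬ ContainsPat w [1, 2, 3] := by
  rintro ⟨f, _, hiff⟩
  have key : ∀ a b : Fin ([1, 2, 3] : List ℕ).length,
      w.get (f a) = w.get (f b) → ([1, 2, 3] : List ℕ).get a = ([1, 2, 3] : List ℕ).get b :=
    fun a b h => (hiff a b).mp h
  have gmem : ∀ k : Fin w.length, w.get k ∈ w := fun k => by
    rw [List.get_eq_getElem]; exact List.getElem_mem k.isLt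
  have n01 : w.get (f ⟨0, by norm_num⟩) ≠ w.get (f ⟨1, by norm_num⟩) := fun h => by
    simpa using key ⟨0, by norm_num⟩ ⟨1, by norm_num⟩ h
  have n02 : w.get (f ⟨0, by norm_num⟩) ≠ w.get (f ⟨2, by norm_num⟩) := fun h => by
    simpa using key ⟨0, by norm_num⟩ ⟨2, by norm_num⟩ h
  have n12 : w.get (f ⟨1, by norm_num⟩) ≠ w.get (f ⟨2, by norm_num⟩) := fun h => by
    simpa using key ⟨1, by norm_num⟩ ⟨2, by norm_num⟩ h
  rcases hel _ (gmem (f ⟨0, by norm_num⟩)) with q0 | q0 <;>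
  rcases hel _ (gmem (f ⟨1, by norm_num⟩)) with q1 | q1 <;>
  rcases hel _ (gmem (f ⟨2, by norm_num⟩)) with q2 | q2 <;>
    omega

lemma isRGF_of {w : List ℕ} (hl : 0 < w.length) (h0 : w.getD 0 0 = 1)
    (hel : ∀ a ∈ w, a = 1 ∨ a = 2) : IsRGF w := by
  refine ⟨fun a ha => by rcases hel a ha with rfl | rfl <;> omega, fun _ => h0, ?_⟩
  intro j hj
  have h2 : w.getD (j + 1) 0 ≤ 2 := by
    rcases hel _ (getD_mem hj) with h | h <;> omega
  have h3 : 1 ≤ (w.take (j + 1)).foldr max 0 := by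
    obtain ⟨b, t, rfl⟩ := List.exists_cons_of_ne_nil (List.length_pos_iff.mp hl)
    have hb : b = 1 := by simpa using h0
    subst hb
    rw [List.take_succ_cons]
    simp only [List.foldr_cons]
    exact le_max_left _ _
  omega


lemma statLB_all_one {w : List ℕ} (h : ∀ a ∈ w, a = 1) : statLB w = 0 := by
  refine Finset.sum_eq_zero fun j hj => ?_
  rw [Finset.mem_range] at hj
  rw [Finset.card_eq_zero, Finset.filter_eq_empty_iff]
  intro v hv
  have hv1 : v = 1 := h v (List.mem_of_mem_take (List.mem_toFinset.mp hv))
  have hj1 : w.getD j 0 = 1 := h _ (getD_mem hj)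
  omega

lemma two_mem {m : ℕ} {w : List ℕ} (h : w ∈ V m)
    (hne : w ≠ List.replicate (m + 1) 1) : 2 ∈ w := by
  by_contra h2
  obtain ⟨hl, h0, hel⟩ := mem_V_props h
  apply hne
  have hall : ∀ b ∈ w, b = 1 := fun b hb => by
    rcases hel b hb with rfl | rfl
    · rfl
    · exact absurd hb h2
  calc w = List.replicate w.length 1 := List.eq_replicate_of_mem hall
    _ = List.replicate (m + 1) 1 := by rw [hl]

lemma LS_sum (m : ℕ) :
    (∑ w ∈ V m, (Polynomial.X : Polynomial ℤ) ^ statLS w) = (Polynomial.X + 1) ^ m := by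
  induction m with
  | zero =>
    rw [show V 0 = {[1]} from rfl, Finset.sum_singleton,
      show statLS [1] = 0 from rfl]
    simp
  | succ m ih =>
    rw [sum_V_succ]
    have e1 : ∀ w ∈ V m, (Polynomial.X : Polynomial ℤ) ^ statLS (w ++ [1])
        = Polynomial.X ^ statLS w := fun w hw => by
      rw [statLS_append1 (mem_V_props hw).2.2]
    have e2 : ∀ w ∈ V m, (Polynomial.X : Polynomial ℤ) ^ statLS (w ++ [2])
        = Polynomial.X * Polynomial.X ^ statLS w := fun w hw => by
      rw [statLS_append2 (mem_V_props hw).2.2 (one_mem_V hw), pow_succ, mul_comm]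
    rw [Finset.sum_congr rfl e1, Finset.sum_congr rfl e2, ← Finset.mul_sum, ih]
    ring

lemma A_sum (m : ℕ) :
    (∑ w ∈ V m, (Polynomial.X : Polynomial ℤ) ^ cnt 1 w)
      = Polynomial.X * (Polynomial.X + 1) ^ m := by
  induction m with
  | zero =>
    rw [show V 0 = {[1]} from rfl, Finset.sum_singleton,
      show cnt 1 [1] = 1 from rfl]
    simp
  | succ m ih =>
    rw [sum_V_succ]
    have e1 : ∀ w ∈ V m, (Polynomial.X : Polynomial ℤ) ^ cnt 1 (w ++ [1])
        = Polynomial.X * Polynomial.X ^ cnt 1 w := fun w _ => by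
      rw [cnt_append, if_pos rfl, pow_succ, mul_comm]
    have e2 : ∀ w ∈ V m, (Polynomial.X : Polynomial ℤ) ^ cnt 1 (w ++ [2])
        = Polynomial.X ^ cnt 1 w := fun w _ => by
      rw [cnt_append, if_neg (by omega), add_zero]
    rw [Finset.sum_congr rfl e1, Finset.sum_congr rfl e2, ← Finset.mul_sum, ih]
    ring

lemma B_sum (m : ℕ) :
    (∑ w ∈ V m, (Polynomial.X : Polynomial ℤ) ^ cnt 2 w) = (Polynomial.X + 1) ^ m := by
  induction m with
  | zero =>
    rw [show V 0 = {[1]} from rfl, Finset.sum_singleton,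
      show cnt 2 [1] = 0 from rfl]
    simp
  | succ m ih =>
    rw [sum_V_succ]
    have e1 : ∀ w ∈ V m, (Polynomial.X : Polynomial ℤ) ^ cnt 2 (w ++ [1])
        = Polynomial.X ^ cnt 2 w := fun w _ => by
      rw [cnt_append, if_neg (by omega), add_zero]
    have e2 : ∀ w ∈ V m, (Polynomial.X : Polynomial ℤ) ^ cnt 2 (w ++ [2])
        = Polynomial.X * Polynomial.X ^ cnt 2 w := fun w _ => by
      rw [cnt_append, if_pos rfl, pow_succ, mul_comm]
    rw [Finset.sum_congr rfl e1, Finset.sum_congr rfl e2, ← Finset.mul_sum, ih]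
    ring

lemma RB_sum (m : ℕ) :
    (∑ w ∈ V m, (Polynomial.X : Polynomial ℤ) ^ statRB w) = (Polynomial.X + 1) ^ m := by
  induction m with
  | zero =>
    rw [show V 0 = {[1]} from rfl, Finset.sum_singleton,
      show statRB [1] = 0 from rfl]
    simp
  | succ m ih =>
    rw [sum_V_succ]
    have e1 : ∀ w ∈ V m, (Polynomial.X : Polynomial ℤ) ^ statRB (w ++ [1])
        = Polynomial.X ^ statRB w := fun w hw => by
      rw [statRB_append1 (mem_V_props hw).2.2]
    have e2 : ∀ w ∈ V m, (Polynomial.X : Polynomial ℤ) ^ statRB (w ++ [2])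
        = Polynomial.X ^ cnt 1 w := fun w hw => by
      rw [statRB_append2 (mem_V_props hw).2.2]
    rw [Finset.sum_congr rfl e1, Finset.sum_congr rfl e2, ih, A_sum]
    ring

lemma RS_sum (m : ℕ) :
    (∑ w ∈ V m, (Polynomial.X : Polynomial ℤ) ^ statRS w) = F m := by
  induction m with
  | zero =>
    rw [show V 0 = {[1]} from rfl, Finset.sum_singleton,
      show statRS [1] = 0 from rfl]
    simp [F]
  | succ m ih =>
    rw [sum_V_succ]
    have e1 : ∀ w ∈ V m, (Polynomial.X : Polynomial ℤ) ^ statRS (w ++ [1])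
        = Polynomial.X ^ cnt 2 w := fun w hw => by
      rw [statRS_append1 (mem_V_props hw).2.2]
    have e2 : ∀ w ∈ V m, (Polynomial.X : Polynomial ℤ) ^ statRS (w ++ [2])
        = Polynomial.X ^ statRS w := fun w hw => by
      rw [statRS_append2 (mem_V_props hw).2.2]
    rw [Finset.sum_congr rfl e1, Finset.sum_congr rfl e2, ih, B_sum, Fstep]
    ring

lemma LB_sum (m : ℕ) :
    (∑ w ∈ V m, (Polynomial.X : Polynomial ℤ) ^ statLB w) = F m := by
  induction m with
  | zero =>
    rw [show V 0 = {[1]} from rfl, Finset.sum_singleton,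
      show statLB [1] = 0 from rfl]
    simp [F]
  | succ m ih =>
    rw [sum_V_succ]
    have e2 : ∀ w ∈ V m, (Polynomial.X : Polynomial ℤ) ^ statLB (w ++ [2])
        = Polynomial.X ^ statLB w := fun w hw => by
      rw [statLB_append2 (mem_V_props hw).2.2]
    have e1 : ∀ w ∈ V m, (Polynomial.X : Polynomial ℤ) ^ statLB (w ++ [1])
        = Polynomial.X ^ (statLB w + (if 2 ∈ w then 1 else 0)) := fun w hw => by
      rw [statLB_append1 (mem_V_props hw).2.2]
    rw [Finset.sum_congr rfl e1, Finset.sum_congr rfl e2]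
    set u := List.replicate (m + 1) 1 with hu
    have huV : u ∈ V m := replicate_mem_V m
    have hsplit :
        (∑ w ∈ V m, (Polynomial.X : Polynomial ℤ) ^ (statLB w + (if 2 ∈ w then 1 else 0)))
          = Polynomial.X * F m - Polynomial.X + 1 := by
      rw [← Finset.add_sum_erase _ _ huV]
      have hu0 : statLB u = 0 := statLB_all_one (fun a ha => List.eq_of_mem_replicate ha)
      have hu2 : (2 : ℕ) ∉ u := by
        intro h
        have := List.eq_of_mem_replicate h
        omega
      rw [hu0, if_neg hu2]
      have herase : ∀ w ∈ (V m).erase u,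
          (Polynomial.X : Polynomial ℤ) ^ (statLB w + (if 2 ∈ w then 1 else 0))
            = Polynomial.X * Polynomial.X ^ statLB w := by
        intro w hw
        have h2w : 2 ∈ w := two_mem (Finset.mem_of_mem_erase hw) (Finset.ne_of_mem_erase hw)
        rw [if_pos h2w, pow_succ, mul_comm]
      rw [Finset.sum_congr rfl herase, ← Finset.mul_sum,
        Finset.sum_erase_eq_sub huV, ih, hu0]
      simp
      ring
    rw [hsplit, ih, XF]
    rw [Fstep]
    ring

lemma Rn_eq (m : ℕ) : Rn (m + 1) [1, 2, 3] = ↑(V m) := by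
  ext w
  simp only [Rn, Set.mem_setOf_eq, Finset.mem_coe]
  constructor
  · rintro ⟨hl, hrgf, hav⟩
    refine mem_V_of hl (hrgf.2.1 (by omega)) fun a ha => ?_
    have h1 := hrgf.1 a ha
    have h2 := letters_le_two hrgf hav a ha
    omega
  · intro h
    obtain ⟨hl, h0, hel⟩ := mem_V_props h
    exact ⟨hl, isRGF_of (by omega) h0 hel, not_contains hel⟩

end S7

/-- `LB_n(1/2/3) = RS_n(1/2/3) = 1 + ∑_{k=0}^{n-2} C(n-1,k+1) q^k`
and `LS_n(1/2/3) = RB_n(1/2/3) = (r+1)^{n-1}`. -/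
theorem stmt7 (n : ℕ) (hn : 1 ≤ n) :
    LBp n [1, 2, 3] = RSp n [1, 2, 3] ∧
    LBp n [1, 2, 3] =
      1 + ∑ k ∈ Finset.range (n - 1),
            ((n - 1).choose (k + 1) : Polynomial ℤ) * Polynomial.X ^ k ∧
    LSp n [1, 2, 3] = RBp n [1, 2, 3] ∧
    LSp n [1, 2, 3] = (Polynomial.X + 1) ^ (n - 1) := by
  obtain ⟨m, rfl⟩ : ∃ m, n = m + 1 := ⟨n - 1, by omega⟩
  have hR := S7.Rn_eq m
  have hLB : LBp (m + 1) [1, 2, 3] = S7.F m := by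
    rw [LBp, hR, finsum_mem_coe_finset]
    exact S7.LB_sum m
  have hRS : RSp (m + 1) [1, 2, 3] = S7.F m := by
    rw [RSp, hR, finsum_mem_coe_finset]
    exact S7.RS_sum m
  have hLS : LSp (m + 1) [1, 2, 3] = (Polynomial.X + 1) ^ m := by
    rw [LSp, hR, finsum_mem_coe_finset]
    exact S7.LS_sum m
  have hRB : RBp (m + 1) [1, 2, 3] = (Polynomial.X + 1) ^ m := by
    rw [RBp, hR, finsum_mem_coe_finset]
    exact S7.RB_sum m
  refine ⟨hLB.trans hRS.symm, ?_, hLS.trans hRB.symm, ?_⟩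
  · rw [hLB]
    simp only [Nat.add_sub_cancel]
    rfl
  · rw [hLS]
    simp only [Nat.add_sub_cancel]
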